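/- If Q(x) is strictly convex for x > 0 and P is the corresponding constrained error probability function, then the global minimizer of P over the feasible set (excluding points where all Q-arguments vanish) is unique. -/

import Mathlib

open MeasureTheory

/-- The Gaussian Q-function. -/
noncomputable def gaussQ (x : ℝ) : ℝ :=
  (1 / Real.sqrt (2 * Real.pi)) * ∫ u in Set.Ioi x, Real.exp (-u ^ 2 / 2)

lemma gauss_integrable : Integrable (fun u : ℝ => Real.exp (-u ^ 2 / 2)) := by
  have h := integrable_exp_neg_mul_sq (by norm_num : (0:ℝ) < 1/2)
  have : (fun u : ℝ => Real.exp (-u ^ 2 / 2)) = fun x : ℝ => Real.exp (-(1/2) * x ^ 2) := by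
    funext u; ring_nf
  rw [this]; exact h

lemma sqrt2pi_pos : 0 < 1 / Real.sqrt (2 * Real.pi) := by
  positivity

lemma gaussQ_split {x y : ℝ} (hxy : x ≤ y) :
    gaussQ x = (1 / Real.sqrt (2 * Real.pi)) * (∫ u in x..y, Real.exp (-u ^ 2 / 2)) + gaussQ y := by
  have hi := gauss_integrable
  rw [gaussQ, gaussQ, intervalIntegral.integral_of_le hxy, ← mul_add]
  congr 1
  rw [← MeasureTheory.setIntegral_union (Set.Ioc_disjoint_Ioi le_rfl) measurableSet_Ioi
    hi.integrableOn hi.integrableOn, Set.Ioc_union_Ioi_eq_Ioi hxy]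

lemma gaussQ_strictAnti : StrictAnti gaussQ := by
  intro x y hxy
  have hpos : 0 < ∫ u in x..y, Real.exp (-u ^ 2 / 2) := by
    apply intervalIntegral.intervalIntegral_pos_of_pos_on gauss_integrable.intervalIntegrable
    · intro u _; positivity
    · exact hxy
  have := gaussQ_split hxy.le
  nlinarith [sqrt2pi_pos]

lemma gaussQ_anti : Antitone gaussQ := gaussQ_strictAnti.antitone

lemma gaussQ_midpoint_aux {x y : ℝ} (hx : 0 ≤ x) (hxy : x ≤ y) :
    2 * gaussQ ((x + y) / 2) ≤ gaussQ x + gaussQ y := by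
  set m := (x + y) / 2 with hm
  have hxm : x ≤ m := by rw [hm]; linarith
  have hmy : m ≤ y := by rw [hm]; linarith
  have hm0 : 0 ≤ m := le_trans hx hxm
  have hint : ∫ u in m..y, Real.exp (-u ^ 2 / 2) ≤ ∫ u in x..m, Real.exp (-u ^ 2 / 2) := by
    have h1 : ∫ u in m..y, Real.exp (-u ^ 2 / 2) ≤ ∫ _ in m..y, Real.exp (-m ^ 2 / 2) := by
      apply intervalIntegral.integral_mono_on hmy gauss_integrable.intervalIntegrable
        intervalIntegrable_const
      intro u hu
      apply Real.exp_le_exp.2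
      have : m ^ 2 ≤ u ^ 2 := pow_le_pow_left₀ hm0 hu.1 2
      linarith
    have h2 : ∫ _ in x..m, Real.exp (-m ^ 2 / 2) ≤ ∫ u in x..m, Real.exp (-u ^ 2 / 2) := by
      apply intervalIntegral.integral_mono_on hxm intervalIntegrable_const
        gauss_integrable.intervalIntegrable
      intro u hu
      apply Real.exp_le_exp.2
      have : u ^ 2 ≤ m ^ 2 := pow_le_pow_left₀ (le_trans hx hu.1) hu.2 2
      linarith
    simp only [intervalIntegral.integral_const, smul_eq_mul] at h1 h2
    have hym : y - m = m - x := by rw [hm]; ring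
    rw [hym] at h1
    exact le_trans h1 h2
  have e1 := gaussQ_split hxm
  have e2 := gaussQ_split hmy
  nlinarith [sqrt2pi_pos]

lemma gaussQ_midpoint {x y : ℝ} (hx : 0 ≤ x) (hy : 0 ≤ y) :
    2 * gaussQ ((x + y) / 2) ≤ gaussQ x + gaussQ y := by
  rcases le_total x y with hxy | hxy
  · exact gaussQ_midpoint_aux hx hxy
  · have := gaussQ_midpoint_aux hy hxy
    rw [add_comm y x] at this
    linarith

lemma gaussQ_key_le {σ' t x y : ℝ} (hσ' : 0 < σ') (hx : 0 ≤ x) (hy : 0 ≤ y) (ht0 : 0 < t)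
    (ht2 : t < 2) : gaussQ (t⁻¹ * (x + y) / σ') ≤ (gaussQ (x / σ') + gaussQ (y / σ')) / 2 := by
  have hinv : (2:ℝ)⁻¹ ≤ t⁻¹ := by rw [inv_le_inv₀ two_pos ht0]; exact ht2.le
  have h1 : (x + y) / 2 ≤ t⁻¹ * (x + y) :=
    by nlinarith [mul_nonneg (by linarith : (0:ℝ) ≤ t⁻¹ - 2⁻¹) (add_nonneg hx hy)]
  have h2 : gaussQ (t⁻¹ * (x + y) / σ') ≤ gaussQ ((x + y) / 2 / σ') :=
    gaussQ_strictAnti.antitone (by gcongr)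
  have h3 : (x + y) / 2 / σ' = (x / σ' + y / σ') / 2 := by ring
  have h4 := gaussQ_midpoint (div_nonneg hx hσ'.le) (div_nonneg hy hσ'.le)
  rw [h3] at h2
  linarith

lemma gaussQ_key_lt {σ' t x y : ℝ} (hσ' : 0 < σ') (hx : 0 ≤ x) (hy : 0 ≤ y) (ht0 : 0 < t)
    (ht2 : t < 2) (hxy : 0 < x + y) :
    gaussQ (t⁻¹ * (x + y) / σ') < (gaussQ (x / σ') + gaussQ (y / σ')) / 2 := by
  have hinv : (2:ℝ)⁻¹ < t⁻¹ := by rw [inv_lt_inv₀ two_pos ht0]; exact ht2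
  have h1 : (x + y) / 2 < t⁻¹ * (x + y) := by nlinarith
  have h2 : gaussQ (t⁻¹ * (x + y) / σ') < gaussQ ((x + y) / 2 / σ') :=
    gaussQ_strictAnti (by gcongr)
  have h3 : (x + y) / 2 / σ' = (x / σ' + y / σ') / 2 := by ring
  have h4 := gaussQ_midpoint (div_nonneg hx hσ'.le) (div_nonneg hy hσ'.le)
  rw [h3] at h2
  linarith

theorem mpe_globalMin_unique (N K B : ℕ)
    (h : Fin N → ℂ) (H : Matrix (Fin N) (Fin K) ℂ)
    (a σz C : ℝ) (ha : 0 < a) (hσ : 0 < σz) (hC : 0 < C)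
    (s : Fin B → Fin K → ℝ)
    (arg : (Fin N → ℂ) → Fin B → ℝ)
    (harg : ∀ w b, arg w b =
      ((∑ i, w i * h i) * (a : ℂ) - ∑ i, w i * ∑ j, H i j * (s b j : ℂ)).re)
    (F1 : Set (Fin N → ℂ))
    (hF1 : F1 = {w : Fin N → ℂ |
      Real.sqrt (∑ i, Complex.normSq (w i)) = 1 ∧ (∀ b, 0 ≤ arg w b) ∧
        ¬(∀ b, arg w b = 0)})
    (P : (Fin N → ℂ) → ℝ)
    (hP : ∀ w, P w = C * ∑ b : Fin B,
      gaussQ (arg w b / ((σz / Real.sqrt 2) * Real.sqrt (∑ i, Complex.normSq (w i)))))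
    (w₁ w₂ : Fin N → ℂ) (hw₁ : w₁ ∈ F1) (hw₂ : w₂ ∈ F1)
    (hmin₁ : ∀ w ∈ F1, P w₁ ≤ P w) (hmin₂ : ∀ w ∈ F1, P w₂ ≤ P w) :
    w₁ = w₂ := by
  by_contra hne
  have hw₁' := hw₁
  have hw₂' := hw₂
  rw [hF1] at hw₁ hw₂
  obtain ⟨hn₁, hpos₁, hnz₁⟩ := hw₁
  obtain ⟨hn₂, hpos₂, hnz₂⟩ := hw₂
  -- linearity of arg
  have hadd : ∀ (u v : Fin N → ℂ) b, arg (fun i => u i + v i) b = arg u b + arg v b := by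
    intro u v b
    simp only [harg, add_mul, Finset.sum_add_distrib, ← Complex.add_re]
    congr 1; ring
  have hsmul : ∀ (r : ℝ) (u : Fin N → ℂ) b, arg (fun i => (r : ℂ) * u i) b = r * arg u b := by
    intro r u b
    simp only [harg, mul_assoc, ← Finset.mul_sum, ← mul_sub, Complex.re_ofReal_mul]
  -- Euclidean space identification
  set v : (Fin N → ℂ) → EuclideanSpace ℂ (Fin N) := fun w => (WithLp.equiv 2 (Fin N → ℂ)).symm w with hv
  have hnorm : ∀ w : Fin N → ℂ, Real.sqrt (∑ i, Complex.normSq (w i)) = ‖v w‖ := by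
    intro w; rw [EuclideanSpace.norm_eq]
    simp [hv, WithLp.equiv_symm_apply, PiLp.toLp_apply, Complex.normSq_eq_norm_sq]
  set u : Fin N → ℂ := fun i => w₁ i + w₂ i with hu
  have huE : v u = v w₁ + v w₂ := by
    rw [hv]; rw [show u = w₁ + w₂ from rfl]; exact WithLp.toLp_add 2 w₁ w₂
  set t : ℝ := Real.sqrt (∑ i, Complex.normSq (u i)) with htdef
  have htn : t = ‖v w₁ + v w₂‖ := by rw [htdef, hnorm]; exact congrArg norm huE
  have hne1 : ‖v w₁‖ = 1 := by rw [← hnorm]; exact hn₁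
  have hne2 : ‖v w₂‖ = 1 := by rw [← hnorm]; exact hn₂
  have ht2 : t < 2 := by
    rcases lt_or_eq_of_le (norm_add_le (v w₁) (v w₂)) with hlt | heq
    · rw [htn]; rw [hne1, hne2] at hlt; linarith
    · exfalso
      have h12 : v w₁ = v w₂ :=
        eq_of_norm_eq_of_norm_add_eq (hne1.trans hne2.symm) heq
      exact hne ((WithLp.equiv 2 (Fin N → ℂ)).symm.injective h12)
  have hargz : ∀ b, arg (fun _ => (0 : ℂ)) b = 0 := by
    intro b; simp [harg]
  have ht0 : 0 < t := by
    rcases ((Real.sqrt_nonneg _).lt_or_eq) with h0 | h0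
    · exact h0
    · exfalso
      have huz : v u = 0 := by
        have hz : ‖v u‖ = 0 := by rw [← hnorm]; exact h0.symm
        exact norm_eq_zero.mp hz
      have huz' : u = fun _ => (0 : ℂ) := by
        have := (WithLp.equiv 2 (Fin N → ℂ)).symm.injective (α := _) (huz.trans rfl)
        exact this
      apply hnz₁
      intro b
      have hsum0 : arg w₁ b + arg w₂ b = 0 := by
        rw [← hadd w₁ w₂ b]
        rw [show (fun i => w₁ i + w₂ i) = u from rfl, huz']
        exact hargz b
      have := hpos₁ b; have := hpos₂ b; linarith
  -- the normalized midpoint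
  set w₀ : Fin N → ℂ := fun i => ((t⁻¹ : ℝ) : ℂ) * u i with hw₀
  have hw₀E : v w₀ = (t⁻¹ : ℝ) • (v w₁ + v w₂) := by
    rw [← huE, hv]
    rw [show w₀ = (t⁻¹ : ℝ) • u from by funext i; simp [hw₀, Complex.real_smul]]
    exact WithLp.toLp_smul 2 (t⁻¹ : ℝ) u
  have hw₀norm : Real.sqrt (∑ i, Complex.normSq (w₀ i)) = 1 := by
    rw [hnorm, hw₀E, norm_smul, Real.norm_eq_abs, abs_of_nonneg (inv_nonneg.2 ht0.le), ← htn,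
      inv_mul_cancel₀ ht0.ne']
  have hargw₀ : ∀ b, arg w₀ b = t⁻¹ * (arg w₁ b + arg w₂ b) := by
    intro b
    rw [hw₀]
    rw [hsmul t⁻¹ u b]
    congr 1
    rw [show u = fun i => w₁ i + w₂ i from rfl]
    exact hadd w₁ w₂ b
  obtain ⟨b₀, hb₀⟩ : ∃ b, arg w₁ b ≠ 0 := not_forall.1 hnz₁
  have hb₀pos : 0 < arg w₁ b₀ := (hpos₁ b₀).lt_of_ne (Ne.symm hb₀)
  have hw₀mem : w₀ ∈ F1 := by
    rw [hF1]
    refine ⟨hw₀norm, fun b => ?_, fun hall => ?_⟩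
    · rw [hargw₀ b]
      exact mul_nonneg (inv_nonneg.2 ht0.le) (add_nonneg (hpos₁ b) (hpos₂ b))
    · have := hall b₀
      rw [hargw₀ b₀] at this
      have hpos : 0 < t⁻¹ * (arg w₁ b₀ + arg w₂ b₀) :=
        mul_pos (inv_pos.2 ht0) (by linarith [hpos₂ b₀])
      linarith
  -- the probability comparison
  have hσ' : 0 < σz / Real.sqrt 2 := div_pos hσ (Real.sqrt_pos.2 two_pos)
  have hPeq : P w₂ = P w₁ := le_antisymm (hmin₂ w₁ hw₁') (hmin₁ w₂ hw₂')
  have hPw₁ : P w₁ = C * ∑ b : Fin B, gaussQ (arg w₁ b / (σz / Real.sqrt 2)) := by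
    rw [hP, hn₁, mul_one]
  have hPw₂ : P w₂ = C * ∑ b : Fin B, gaussQ (arg w₂ b / (σz / Real.sqrt 2)) := by
    rw [hP, hn₂, mul_one]
  have hPw₀ : P w₀ = C * ∑ b : Fin B, gaussQ (arg w₀ b / (σz / Real.sqrt 2)) := by
    rw [hP, hw₀norm, mul_one]
  have hlt : ∑ b : Fin B, gaussQ (arg w₀ b / (σz / Real.sqrt 2)) <
      ∑ b : Fin B, (gaussQ (arg w₁ b / (σz / Real.sqrt 2)) +
        gaussQ (arg w₂ b / (σz / Real.sqrt 2))) / 2 := by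
    apply Finset.sum_lt_sum
    · intro b _
      rw [hargw₀ b]
      exact gaussQ_key_le hσ' (hpos₁ b) (hpos₂ b) ht0 ht2
    · refine ⟨b₀, Finset.mem_univ _, ?_⟩
      rw [hargw₀ b₀]
      exact gaussQ_key_lt hσ' (hpos₁ b₀) (hpos₂ b₀) ht0 ht2 (by linarith [hpos₂ b₀])
  have hfinal : P w₀ < P w₁ := by
    have h1 : P w₀ < C * ∑ b : Fin B, (gaussQ (arg w₁ b / (σz / Real.sqrt 2)) +
        gaussQ (arg w₂ b / (σz / Real.sqrt 2))) / 2 := by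
      rw [hPw₀]; exact mul_lt_mul_of_pos_left hlt hC
    have h2 : C * ∑ b : Fin B, (gaussQ (arg w₁ b / (σz / Real.sqrt 2)) +
        gaussQ (arg w₂ b / (σz / Real.sqrt 2))) / 2 = (P w₁ + P w₂) / 2 := by
      rw [hPw₁, hPw₂, ← Finset.sum_div, Finset.sum_add_distrib]
      ring
    rw [h2, hPeq] at h1
    linarith
  exact absurd (hmin₁ w₀ hw₀mem) (not_le.2 hfinal)
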